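/- A connected regular graph whose adjacency matrix has exactly four distinct eigenvalues is walk-regular: for every r ≥ 0, the diagonal entries (A^r)_{xx} are equal for all vertices x. -/

import Mathlib

open Matrix

/-- Maximum principle / Perron uniqueness: on a connected `k`-regular graph, any real
eigenvector of the adjacency matrix with eigenvalue `k` is constant. -/
lemma eigen_const_of_connected_regular {V : Type*} [Fintype V] [DecidableEq V]
    {G : SimpleGraph V} [DecidableRel G.Adj] (hconn : G.Connected)
    {k : ℕ} (hreg : G.IsRegularOfDegree k) {v : V → ℝ}
    (hv : G.adjMatrix ℝ *ᵥ v = (k : ℝ) • v) (x y : V) : v x = v y := by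
  have hne : Nonempty V := hconn.nonempty
  obtain ⟨x₀, -, hmax⟩ :=
    Finset.exists_max_image Finset.univ v ⟨Classical.arbitrary V, Finset.mem_univ _⟩
  have key : ∀ z, v z = v x₀ → ∀ w, G.Adj z w → v w = v x₀ := by
    intro z hz w hzw
    have h1 : ∑ u ∈ G.neighborFinset z, v u = (k : ℝ) * v x₀ := by
      have := congrFun hv z
      simp only [SimpleGraph.adjMatrix_mulVec_apply, Pi.smul_apply, smul_eq_mul] at this
      rw [this, hz]
    have h2 : ∑ u ∈ G.neighborFinset z, (v x₀ - v u) = 0 := by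
      rw [Finset.sum_sub_distrib, Finset.sum_const, SimpleGraph.card_neighborFinset_eq_degree,
        hreg z, h1, nsmul_eq_mul, sub_self]
    have h3 := (Finset.sum_eq_zero_iff_of_nonneg
      (fun u _ => sub_nonneg.2 (hmax u (Finset.mem_univ u)))).1 h2 w
      (by rwa [SimpleGraph.mem_neighborFinset])
    linarith [h3]
  have hall : ∀ z, v z = v x₀ := by
    intro z
    obtain ⟨w⟩ := hconn.preconnected x₀ z
    have : ∀ {p q : V} (_ : G.Walk p q), v p = v x₀ → v q = v x₀ := by
      intro p q w
      induction w with
      | nil => exact id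
      | cons h p ih => intro hp; exact ih (key _ hp _ h)
    exact this w rfl
  rw [hall x, hall y]

/-- A connected regular graph whose adjacency matrix has exactly four distinct eigenvalues
is walk-regular: for every `r`, the diagonal entries of `A^r` are all equal. -/
theorem walkRegular_of_four_eigenvalues {V : Type*} [Fintype V] [DecidableEq V]
    (G : SimpleGraph V) [DecidableRel G.Adj]
    (hconn : G.Connected) (k : ℕ) (hreg : G.IsRegularOfDegree k)
    (hfour : (spectrum ℝ (G.adjMatrix ℝ)).ncard = 4) :
    ∀ (r : ℕ) (x y : V), ((G.adjMatrix ℝ) ^ r) x x = ((G.adjMatrix ℝ) ^ r) y y := by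
  have hne : Nonempty V := hconn.nonempty
  set A := G.adjMatrix ℝ with hAdef
  have hA : A.IsHermitian := by
    ext i j
    simp [hAdef, Matrix.conjTranspose_apply, SimpleGraph.adjMatrix_apply, G.adj_comm]
  -- the spectrum is a finite set of 4 elements
  have hfin : (spectrum ℝ A).Finite := Set.finite_of_ncard_ne_zero (by rw [hfour]; norm_num)
  have hcard : hfin.toFinset.card = 4 := by
    rw [Set.ncard_eq_toFinset_card _ hfin] at hfour; exact hfour
  -- k is in the spectrum
  have hk : (k : ℝ) ∈ spectrum ℝ A := by
    rw [spectrum.mem_iff]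
    intro hunit
    rw [Matrix.isUnit_iff_isUnit_det, isUnit_iff_ne_zero] at hunit
    apply hunit
    rw [← Matrix.exists_mulVec_eq_zero_iff]
    refine ⟨Function.const V 1, ?_, ?_⟩
    · intro h
      have := congrFun h (Classical.arbitrary V)
      simp [Function.const] at this
    · have h1 : A *ᵥ Function.const V (1 : ℝ) = fun _ => (k : ℝ) := by
        funext z
        rw [SimpleGraph.adjMatrix_mulVec_const_apply_of_regular hreg, mul_one]
      rw [Matrix.sub_mulVec, h1, Algebra.algebraMap_eq_smul_one, Matrix.smul_mulVec,
        Matrix.one_mulVec]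
      funext z
      simp [Function.const]
  have hkmem : (k : ℝ) ∈ hfin.toFinset := hfin.mem_toFinset.2 hk
  -- extract the three other eigenvalues
  have hcard3 : (hfin.toFinset.erase (k : ℝ)).card = 3 := by
    rw [Finset.card_erase_of_mem hkmem, hcard]
  obtain ⟨a, b, c, hab, hac, hbc, ht⟩ := Finset.card_eq_three.1 hcard3
  have hs : hfin.toFinset = insert (k : ℝ) {a, b, c} := by
    rw [← ht, Finset.insert_erase hkmem]
  have hspec : ∀ μ : ℝ, μ ∈ spectrum ℝ A → μ = k ∨ μ = a ∨ μ = b ∨ μ = c := by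
    intro μ hμ
    have : μ ∈ hfin.toFinset := hfin.mem_toFinset.2 hμ
    rw [hs] at this
    simpa using this
  -- spectral theorem setup
  set U : Matrix V V ℝ := (hA.eigenvectorUnitary : Matrix V V ℝ) with hUdef
  have hU1 : U * star U = 1 := Matrix.mem_unitaryGroup_iff.mp hA.eigenvectorUnitary.2
  have hU2 : star U * U = 1 := Matrix.mem_unitaryGroup_iff'.mp hA.eigenvectorUnitary.2
  have hdiag : star U * A * U = diagonal hA.eigenvalues := by
    have := hA.conjStarAlgAut_star_eigenvectorUnitary
    rw [Unitary.conjStarAlgAut_star_apply] at this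
    rwa [show (RCLike.ofReal ∘ hA.eigenvalues : V → ℝ) = hA.eigenvalues by
      funext i; simp [RCLike.ofReal_real_eq_id]] at this
  have conj : ∀ μ : ℝ, star U * (A - μ • 1) * U = diagonal (fun i => hA.eigenvalues i - μ) := by
    intro μ
    have h1 : star U * (μ • (1 : Matrix V V ℝ)) * U = μ • (1 : Matrix V V ℝ) := by
      rw [Matrix.mul_smul, Matrix.smul_mul, mul_one, hU2]
    rw [Matrix.mul_sub, Matrix.sub_mul, hdiag, h1]
    rw [show μ • (1 : Matrix V V ℝ) = diagonal (fun _ => μ) by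
      ext i j; by_cases h : i = j <;> simp [h, Matrix.one_apply, Matrix.diagonal]]
    rw [Matrix.diagonal_sub]
  have cm : ∀ M N : Matrix V V ℝ,
      (star U * M * U) * (star U * N * U) = star U * (M * N) * U := by
    intro M N
    have h5 : ∀ X : Matrix V V ℝ, U * (star U * X) = X := fun X => by
      rw [← mul_assoc, hU1, one_mul]
    simp only [mul_assoc, h5]
  -- annihilating polynomial
  set Q : Matrix V V ℝ := (A - a • 1) * ((A - b • 1) * (A - c • 1)) with hQdef
  have key0 : (A - (k : ℝ) • 1) * Q = 0 := by
    have hzero : star U * ((A - (k : ℝ) • 1) * Q) * U = 0 := by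
      rw [hQdef, ← cm, ← cm, ← cm, conj, conj, conj, conj,
        Matrix.diagonal_mul_diagonal, Matrix.diagonal_mul_diagonal,
        Matrix.diagonal_mul_diagonal]
      have : (fun i => (hA.eigenvalues i - (k : ℝ)) *
          ((hA.eigenvalues i - a) * ((hA.eigenvalues i - b) * (hA.eigenvalues i - c))))
          = fun _ => (0 : ℝ) := by
        funext i
        rcases hspec _ (hA.eigenvalues_mem_spectrum_real i) with h | h | h | h <;>
          rw [h] <;> ring
      rw [this, Matrix.diagonal_zero]
    have hP : ∀ X : Matrix V V ℝ, U * (star U * X * U) * star U = X := by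
      intro X
      simp only [← mul_assoc]
      rw [hU1, one_mul, mul_assoc, hU1, mul_one]
    rw [← hP ((A - (k : ℝ) • 1) * Q), hzero, mul_zero, zero_mul]
  have hAQ : A * Q = (k : ℝ) • Q := by
    have h := key0
    rw [Matrix.sub_mul, Matrix.smul_mul, one_mul, sub_eq_zero] at h
    exact h
  have hcomm : Commute A Q := by
    have hc : ∀ μ : ℝ, Commute A (A - μ • 1) := fun μ =>
      (Commute.refl A).sub_right ((Commute.one_right A).smul_right μ)
    exact (hc a).mul_right ((hc b).mul_right (hc c))
  have hQA : Q * A = (k : ℝ) • Q := by rw [← hcomm.eq, hAQ]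
  -- Q has all entries equal (in particular constant diagonal)
  have hcol : ∀ j x' y', Q x' j = Q y' j := by
    intro j x' y'
    refine eigen_const_of_connected_regular hconn hreg (v := fun i => Q i j) ?_ x' y'
    funext i
    have h1 : (A *ᵥ fun i => Q i j) i = (A * Q) i j := by
      simp [Matrix.mulVec, Matrix.mul_apply, dotProduct]
    rw [h1, hAQ]
    simp
  have hrow : ∀ i j j', Q i j = Q i j' := by
    intro i j j'
    refine eigen_const_of_connected_regular hconn hreg (v := fun j => Q i j) ?_ j j'
    have hsym : ∀ l m, A l m = A m l := fun l m => by
      simp [hAdef, SimpleGraph.adjMatrix_apply, G.adj_comm]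
    funext l
    have h1 : (A *ᵥ fun j => Q i j) l = (Q * A) i l := by
      simp only [Matrix.mulVec, Matrix.mul_apply, dotProduct]
      exact Finset.sum_congr rfl fun m _ => by rw [hsym l m, mul_comm]
    rw [h1, hQA]
    simp
  have hQdiagc : ∀ x y, Q x x = Q y y := fun x y => (hcol x x y).trans (hrow y x y)
  -- diagonal of A and A^2
  have hAdiag : ∀ z, A z z = 0 := fun z => by simp [hAdef]
  have hA2diag : ∀ z, (A * A) z z = (k : ℝ) := fun z => by
    rw [hAdef, G.adjMatrix_mul_self_apply_self, hreg z]
  -- expansion of Q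
  have hA3 : A * (A * A) = Q + (a + b + c) • (A * A) + (-(a * b + a * c + b * c)) • A
      + (a * b * c) • (1 : Matrix V V ℝ) := by
    rw [hQdef]
    simp only [Matrix.sub_mul, Matrix.mul_sub, Matrix.smul_mul, Matrix.mul_smul, one_mul,
      mul_one, smul_smul, smul_sub, sub_smul]
    module
  -- main induction
  suffices h : ∀ r : ℕ, ∃ α β γ δ : ℝ, A ^ r = α • 1 + β • A + γ • (A * A) + δ • Q by
    intro r x y
    obtain ⟨α, β, γ, δ, hr⟩ := h r
    have e : ∀ z, (A ^ r) z z = α + γ * k + δ * Q x x := by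
      intro z
      rw [hr]
      simp only [Matrix.add_apply, Matrix.smul_apply, Matrix.one_apply_eq, smul_eq_mul,
        hAdiag z, hA2diag z, hQdiagc z x]
      ring
    rw [show ((G.adjMatrix ℝ) ^ r) = A ^ r from rfl, e x, e y]
  intro r
  induction r with
  | zero => exact ⟨1, 0, 0, 0, by simp⟩
  | succ n ih =>
    obtain ⟨α, β, γ, δ, hr⟩ := ih
    refine ⟨γ * (a * b * c), α + γ * (-(a * b + a * c + b * c)), β + γ * (a + b + c),
      γ + δ * k, ?_⟩
    rw [pow_succ', hr, Matrix.mul_add, Matrix.mul_add, Matrix.mul_add,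
      Matrix.mul_smul, Matrix.mul_smul, Matrix.mul_smul, Matrix.mul_smul,
      mul_one, hAQ, hA3]
    module
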